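/- There exists κ > 0, depending only on c1, c2, σ0, σ1, such that for |Φ| < 2κ the eigenvalues are differentiable in Φ with gradients ∇λ1 = −∇λ4 = ( ((σ0+σ1)√Δ + (a−b)(σ0−σ1)) / (2λ1√Δ), 4σ1²φ2 / (λ1√Δ), 0, 0 ) and ∇λ2 = −∇λ3 = ( ((σ0+σ1)√Δ − (a−b)(σ0−σ1)) / (2λ2√Δ), −4σ1²φ2 / (λ2√Δ), 0, 0 ). -/

import Mathlib

noncomputable section

open Real Matrix Set

namespace ElasticIP

/-- Euclidean norm on `ℝ⁴` (presented as `Fin 4 → ℝ`). -/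
def eucNorm4 (Φ : Fin 4 → ℝ) : ℝ := Real.sqrt (∑ i, (Φ i) ^ 2)

/-- `a(Φ) = c₁² + 2σ₀φ₁`. -/
def aF (c1 σ0 : ℝ) (Φ : Fin 4 → ℝ) : ℝ := c1 ^ 2 + 2 * σ0 * Φ 0

/-- `b(Φ) = c₂² + 2σ₁φ₁`. -/
def bF (c2 σ1 : ℝ) (Φ : Fin 4 → ℝ) : ℝ := c2 ^ 2 + 2 * σ1 * Φ 0

/-- `c(Φ) = 2σ₁φ₂`. -/
def cF (σ1 : ℝ) (Φ : Fin 4 → ℝ) : ℝ := 2 * σ1 * Φ 1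

/-- `Δ = (a-b)² + 4c²`. -/
def ΔF (c1 c2 σ0 σ1 : ℝ) (Φ : Fin 4 → ℝ) : ℝ :=
  (aF c1 σ0 Φ - bF c2 σ1 Φ) ^ 2 + 4 * cF σ1 Φ ^ 2

/-- The coefficient matrix `A(Φ)` of the first-order system. -/
def AM (c1 c2 σ0 σ1 : ℝ) (Φ : Fin 4 → ℝ) : Matrix (Fin 4) (Fin 4) ℝ :=
  !![0, 0, -1, 0;
     0, 0, 0, -1;
     -aF c1 σ0 Φ, -cF σ1 Φ, 0, 0;
     -cF σ1 Φ, -bF c2 σ1 Φ, 0, 0]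

/-- `λ₁ = √(((a+b)+√Δ)/2)`. -/
def lam1 (c1 c2 σ0 σ1 : ℝ) (Φ : Fin 4 → ℝ) : ℝ :=
  Real.sqrt ((aF c1 σ0 Φ + bF c2 σ1 Φ + Real.sqrt (ΔF c1 c2 σ0 σ1 Φ)) / 2)

/-- `λ₂ = √(((a+b)-√Δ)/2)`. -/
def lam2 (c1 c2 σ0 σ1 : ℝ) (Φ : Fin 4 → ℝ) : ℝ :=
  Real.sqrt ((aF c1 σ0 Φ + bF c2 σ1 Φ - Real.sqrt (ΔF c1 c2 σ0 σ1 Φ)) / 2)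

/-- `λ₃ = -λ₂`. -/
def lam3 (c1 c2 σ0 σ1 : ℝ) (Φ : Fin 4 → ℝ) : ℝ := - lam2 c1 c2 σ0 σ1 Φ

/-- `λ₄ = -λ₁`. -/
def lam4 (c1 c2 σ0 σ1 : ℝ) (Φ : Fin 4 → ℝ) : ℝ := - lam1 c1 c2 σ0 σ1 Φ

/-- Right eigenvector `r₁`. -/
def r1 (c1 c2 σ0 σ1 : ℝ) (Φ : Fin 4 → ℝ) : Fin 4 → ℝ :=
  ![(lam1 c1 c2 σ0 σ1 Φ ^ 2 - bF c2 σ1 Φ) / (2 * σ1),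
    Φ 1,
    -(lam1 c1 c2 σ0 σ1 Φ * (lam1 c1 c2 σ0 σ1 Φ ^ 2 - bF c2 σ1 Φ)) / (2 * σ1),
    -(lam1 c1 c2 σ0 σ1 Φ) * Φ 1]

/-- Right eigenvector `r₂`. -/
def r2 (c1 c2 σ0 σ1 : ℝ) (Φ : Fin 4 → ℝ) : Fin 4 → ℝ :=
  ![(lam2 c1 c2 σ0 σ1 Φ ^ 2 - bF c2 σ1 Φ) / (2 * σ1),
    Φ 1,
    -(lam2 c1 c2 σ0 σ1 Φ * (lam2 c1 c2 σ0 σ1 Φ ^ 2 - bF c2 σ1 Φ)) / (2 * σ1),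
    -(lam2 c1 c2 σ0 σ1 Φ) * Φ 1]

/-- Right eigenvector `r₃`. -/
def r3 (c1 c2 σ0 σ1 : ℝ) (Φ : Fin 4 → ℝ) : Fin 4 → ℝ :=
  ![(lam2 c1 c2 σ0 σ1 Φ ^ 2 - bF c2 σ1 Φ) / (2 * σ1),
    Φ 1,
    lam2 c1 c2 σ0 σ1 Φ * (lam2 c1 c2 σ0 σ1 Φ ^ 2 - bF c2 σ1 Φ) / (2 * σ1),
    lam2 c1 c2 σ0 σ1 Φ * Φ 1]

/-- Right eigenvector `r₄`. -/
def r4 (c1 c2 σ0 σ1 : ℝ) (Φ : Fin 4 → ℝ) : Fin 4 → ℝ :=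
  ![(lam1 c1 c2 σ0 σ1 Φ ^ 2 - bF c2 σ1 Φ) / (2 * σ1),
    Φ 1,
    lam1 c1 c2 σ0 σ1 Φ * (lam1 c1 c2 σ0 σ1 Φ ^ 2 - bF c2 σ1 Φ) / (2 * σ1),
    lam1 c1 c2 σ0 σ1 Φ * Φ 1]

/-- `K = (Δ + (a-b)√Δ)/(4σ₁²)`. -/
def KF (c1 c2 σ0 σ1 : ℝ) (Φ : Fin 4 → ℝ) : ℝ :=
  (ΔF c1 c2 σ0 σ1 Φ + (aF c1 σ0 Φ - bF c2 σ1 Φ) * Real.sqrt (ΔF c1 c2 σ0 σ1 Φ)) / (4 * σ1 ^ 2)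

/-- `N = (Δ - (a-b)√Δ)/(4σ₁²)`. -/
def NF (c1 c2 σ0 σ1 : ℝ) (Φ : Fin 4 → ℝ) : ℝ :=
  (ΔF c1 c2 σ0 σ1 Φ - (aF c1 σ0 Φ - bF c2 σ1 Φ) * Real.sqrt (ΔF c1 c2 σ0 σ1 Φ)) / (4 * σ1 ^ 2)

/-- Left eigenvector `l₁`. -/
def l1 (c1 c2 σ0 σ1 : ℝ) (Φ : Fin 4 → ℝ) : Fin 4 → ℝ :=
  (KF c1 c2 σ0 σ1 Φ)⁻¹ •
    ![(lam1 c1 c2 σ0 σ1 Φ ^ 2 - bF c2 σ1 Φ) / (2 * σ1),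
      Φ 1,
      -((lam1 c1 c2 σ0 σ1 Φ ^ 2 - bF c2 σ1 Φ) / (2 * σ1 * lam1 c1 c2 σ0 σ1 Φ)),
      -(Φ 1 / lam1 c1 c2 σ0 σ1 Φ)]

/-- Left eigenvector `l₂`. -/
def l2 (c1 c2 σ0 σ1 : ℝ) (Φ : Fin 4 → ℝ) : Fin 4 → ℝ :=
  (NF c1 c2 σ0 σ1 Φ)⁻¹ •
    ![(lam2 c1 c2 σ0 σ1 Φ ^ 2 - bF c2 σ1 Φ) / (2 * σ1),
      Φ 1,
      -((lam2 c1 c2 σ0 σ1 Φ ^ 2 - bF c2 σ1 Φ) / (2 * σ1 * lam2 c1 c2 σ0 σ1 Φ)),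
      -(Φ 1 / lam2 c1 c2 σ0 σ1 Φ)]

/-- Left eigenvector `l₃`. -/
def l3 (c1 c2 σ0 σ1 : ℝ) (Φ : Fin 4 → ℝ) : Fin 4 → ℝ :=
  (NF c1 c2 σ0 σ1 Φ)⁻¹ •
    ![(lam2 c1 c2 σ0 σ1 Φ ^ 2 - bF c2 σ1 Φ) / (2 * σ1),
      Φ 1,
      (lam2 c1 c2 σ0 σ1 Φ ^ 2 - bF c2 σ1 Φ) / (2 * σ1 * lam2 c1 c2 σ0 σ1 Φ),
      Φ 1 / lam2 c1 c2 σ0 σ1 Φ]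

/-- Left eigenvector `l₄`. -/
def l4 (c1 c2 σ0 σ1 : ℝ) (Φ : Fin 4 → ℝ) : Fin 4 → ℝ :=
  (KF c1 c2 σ0 σ1 Φ)⁻¹ •
    ![(lam1 c1 c2 σ0 σ1 Φ ^ 2 - bF c2 σ1 Φ) / (2 * σ1),
      Φ 1,
      (lam1 c1 c2 σ0 σ1 Φ ^ 2 - bF c2 σ1 Φ) / (2 * σ1 * lam1 c1 c2 σ0 σ1 Φ),
      Φ 1 / lam1 c1 c2 σ0 σ1 Φ]

/-- Indexed eigenvalues `λᵢ`, `i = 1,…,4` realised as `i : Fin 4`. -/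
def lamI (c1 c2 σ0 σ1 : ℝ) (i : Fin 4) (Φ : Fin 4 → ℝ) : ℝ :=
  match i with
  | 0 => lam1 c1 c2 σ0 σ1 Φ
  | 1 => lam2 c1 c2 σ0 σ1 Φ
  | 2 => lam3 c1 c2 σ0 σ1 Φ
  | 3 => lam4 c1 c2 σ0 σ1 Φ

/-- Indexed right eigenvectors `rᵢ`. -/
def rI (c1 c2 σ0 σ1 : ℝ) (i : Fin 4) (Φ : Fin 4 → ℝ) : Fin 4 → ℝ :=
  match i with
  | 0 => r1 c1 c2 σ0 σ1 Φ
  | 1 => r2 c1 c2 σ0 σ1 Φ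
  | 2 => r3 c1 c2 σ0 σ1 Φ
  | 3 => r4 c1 c2 σ0 σ1 Φ

/-- Indexed left eigenvectors `lᵢ`. -/
def lI (c1 c2 σ0 σ1 : ℝ) (i : Fin 4) (Φ : Fin 4 → ℝ) : Fin 4 → ℝ :=
  match i with
  | 0 => l1 c1 c2 σ0 σ1 Φ
  | 1 => l2 c1 c2 σ0 σ1 Φ
  | 2 => l3 c1 c2 σ0 σ1 Φ
  | 3 => l4 c1 c2 σ0 σ1 Φ

/-- Jacobian matrix of a map `ℝ⁴ → ℝ⁴`. -/
def jac (f : (Fin 4 → ℝ) → (Fin 4 → ℝ)) (Φ : Fin 4 → ℝ) : Matrix (Fin 4) (Fin 4) ℝ :=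
  fun i j => fderiv ℝ (fun Ψ => f Ψ i) Φ (Pi.single j 1)

/-- `cⁱᵢₘ(Φ) = ∇λᵢ(Φ) · rₘ(Φ)`. -/
def cCo (c1 c2 σ0 σ1 : ℝ) (i m : Fin 4) (Φ : Fin 4 → ℝ) : ℝ :=
  fderiv ℝ (lamI c1 c2 σ0 σ1 i) Φ (rI c1 c2 σ0 σ1 m Φ)

/-- `γⁱᵢₘ(Φ) = -(λᵢ-λₘ) lᵢ · (Drᵢ rₘ - Drₘ rᵢ)`. -/
def gammaII (c1 c2 σ0 σ1 : ℝ) (i m : Fin 4) (Φ : Fin 4 → ℝ) : ℝ :=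
  -(lamI c1 c2 σ0 σ1 i Φ - lamI c1 c2 σ0 σ1 m Φ) *
    (lI c1 c2 σ0 σ1 i Φ ⬝ᵥ
      (jac (rI c1 c2 σ0 σ1 i) Φ *ᵥ rI c1 c2 σ0 σ1 m Φ -
        jac (rI c1 c2 σ0 σ1 m) Φ *ᵥ rI c1 c2 σ0 σ1 i Φ))

/-- `γⁱₖₘ(Φ) = -(λₖ-λₘ) lᵢ · (Drₖ rₘ)`. -/
def gammaKM (c1 c2 σ0 σ1 : ℝ) (i k m : Fin 4) (Φ : Fin 4 → ℝ) : ℝ :=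
  -(lamI c1 c2 σ0 σ1 k Φ - lamI c1 c2 σ0 σ1 m Φ) *
    (lI c1 c2 σ0 σ1 i Φ ⬝ᵥ (jac (rI c1 c2 σ0 σ1 k) Φ *ᵥ rI c1 c2 σ0 σ1 m Φ))



/-- Projection as a continuous linear map. -/
private abbrev projCLM (i : Fin 4) : (Fin 4 → ℝ) →L[ℝ] ℝ := ContinuousLinearMap.proj i

private lemma core_bounds (c1 c2 σ0 σ1 x y : ℝ) (hc2 : 0 < c2) (hc12 : c2 < c1)
    (hx : 2 * (|σ0| + |σ1| + 1) * |x| < min (c1^2 - c2^2) (c2^2) / 8)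
    (hy : 2 * (|σ0| + |σ1| + 1) * |y| < min (c1^2 - c2^2) (c2^2) / 8) :
    0 < (c1^2 + 2*σ0*x) - (c2^2 + 2*σ1*x) ∧
    (7/8) * c2^2 < c2^2 + 2*σ1*x ∧
    (2*σ1*y)^2 < (c1^2 + 2*σ0*x) * (c2^2 + 2*σ1*x) := by
  have hm1 : min (c1^2 - c2^2) (c2^2) ≤ c1^2 - c2^2 := min_le_left _ _
  have hm2 : min (c1^2 - c2^2) (c2^2) ≤ c2^2 := min_le_right _ _
  have hmpos : 0 < min (c1^2 - c2^2) (c2^2) := lt_min (by nlinarith) (by positivity)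
  have hsd : |σ0 - σ1| ≤ |σ0| + |σ1| + 1 := by
    have := abs_sub σ0 σ1; linarith
  have hs1 : |σ1| ≤ |σ0| + |σ1| + 1 := by have := abs_nonneg σ0; linarith
  have e1 : |2 * (σ0 - σ1) * x| ≤ 2 * (|σ0| + |σ1| + 1) * |x| := by
    rw [abs_mul, abs_mul, abs_two]
    nlinarith [abs_nonneg x, mul_le_mul_of_nonneg_right hsd (abs_nonneg x)]
  have e2 : |2 * σ1 * x| ≤ 2 * (|σ0| + |σ1| + 1) * |x| := by
    rw [abs_mul, abs_mul, abs_two]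
    nlinarith [abs_nonneg x, mul_le_mul_of_nonneg_right hs1 (abs_nonneg x)]
  have e3 : |2 * σ1 * y| ≤ 2 * (|σ0| + |σ1| + 1) * |y| := by
    rw [abs_mul, abs_mul, abs_two]
    nlinarith [abs_nonneg y, mul_le_mul_of_nonneg_right hs1 (abs_nonneg y)]
  have n1 := neg_abs_le (2 * (σ0 - σ1) * x)
  have n2 := neg_abs_le (2 * σ1 * x)
  have hab : 0 < (c1^2 + 2*σ0*x) - (c2^2 + 2*σ1*x) := by nlinarith
  have hb : (7/8) * c2^2 < c2^2 + 2*σ1*x := by nlinarith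
  refine ⟨hab, hb, ?_⟩
  have hcc : |2*σ1*y| < (1/8) * c2^2 := by nlinarith
  have ha : (7/8) * c2^2 < c1^2 + 2*σ0*x := by nlinarith
  nlinarith [sq_abs (2*σ1*y), abs_nonneg (2*σ1*y), sq_nonneg c2]

private lemma lam_deriv (c1 c2 σ0 σ1 e lam : ℝ) (Φ : Fin 4 → ℝ)
    (hD : 0 < ΔF c1 c2 σ0 σ1 Φ)
    (hg : 0 < (aF c1 σ0 Φ + bF c2 σ1 Φ + e * Real.sqrt (ΔF c1 c2 σ0 σ1 Φ)) / 2)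
    (hlam : lam = Real.sqrt ((aF c1 σ0 Φ + bF c2 σ1 Φ + e * Real.sqrt (ΔF c1 c2 σ0 σ1 Φ)) / 2)) :
    ∃ L : (Fin 4 → ℝ) →L[ℝ] ℝ,
      HasFDerivAt
        (fun Ψ => Real.sqrt ((aF c1 σ0 Ψ + bF c2 σ1 Ψ + e * Real.sqrt (ΔF c1 c2 σ0 σ1 Ψ)) / 2))
        L Φ ∧
      L (Pi.single 0 1) =
        ((σ0 + σ1) * Real.sqrt (ΔF c1 c2 σ0 σ1 Φ) +
            e * (aF c1 σ0 Φ - bF c2 σ1 Φ) * (σ0 - σ1)) /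
          (2 * lam * Real.sqrt (ΔF c1 c2 σ0 σ1 Φ)) ∧
      L (Pi.single 1 1) =
        e * (4 * σ1 ^ 2 * Φ 1) / (lam * Real.sqrt (ΔF c1 c2 σ0 σ1 Φ)) ∧
      L (Pi.single 2 1) = 0 ∧
      L (Pi.single 3 1) = 0 := by
  have hP0 : HasFDerivAt (fun Ψ : Fin 4 → ℝ => Ψ 0) (projCLM 0) Φ := (projCLM 0).hasFDerivAt
  have hP1 : HasFDerivAt (fun Ψ : Fin 4 → ℝ => Ψ 1) (projCLM 1) Φ := (projCLM 1).hasFDerivAt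
  have hA : HasFDerivAt (fun Ψ => aF c1 σ0 Ψ) (0 + (2*σ0) • projCLM 0) Φ :=
    (hasFDerivAt_const (c1^2) Φ).add (hP0.const_mul (2*σ0))
  have hB : HasFDerivAt (fun Ψ => bF c2 σ1 Ψ) (0 + (2*σ1) • projCLM 0) Φ :=
    (hasFDerivAt_const (c2^2) Φ).add (hP0.const_mul (2*σ1))
  have hC : HasFDerivAt (fun Ψ => cF σ1 Ψ) ((2*σ1) • projCLM 1) Φ :=
    hP1.const_mul (2*σ1)
  have hΔraw := ((hA.sub hB).mul (hA.sub hB)).add ((hC.mul hC).const_mul 4)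
  have hfun : (fun Ψ => ΔF c1 c2 σ0 σ1 Ψ)
      = (fun Ψ => (aF c1 σ0 Ψ - bF c2 σ1 Ψ) * (aF c1 σ0 Ψ - bF c2 σ1 Ψ)
          + 4 * (cF σ1 Ψ * cF σ1 Ψ)) := by
    funext Ψ; simp [ΔF]; ring
  have hΔ : HasFDerivAt (fun Ψ => ΔF c1 c2 σ0 σ1 Ψ) _ Φ :=
    hΔraw.congr_of_eventuallyEq (Filter.Eventually.of_forall fun Ψ => congrFun hfun Ψ)
  have hs := (Real.hasDerivAt_sqrt hD.ne').comp_hasFDerivAt Φ hΔ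
  have hE := hs.const_mul e
  have hSum := ((hA.add hB).add hE).const_mul ((1:ℝ)/2)
  have hfun2 : (fun Ψ => (aF c1 σ0 Ψ + bF c2 σ1 Ψ + e * Real.sqrt (ΔF c1 c2 σ0 σ1 Ψ)) / 2)
      = (fun Ψ => (1/2) * (aF c1 σ0 Ψ + bF c2 σ1 Ψ + e * Real.sqrt (ΔF c1 c2 σ0 σ1 Ψ))) := by
    funext Ψ; ring
  have hg2 := hfun2.symm ▸ hSum
  have hlamD := (Real.hasDerivAt_sqrt hg.ne').comp_hasFDerivAt Φ hg2
  refine ⟨_, hlamD, ?_, ?_, ?_, ?_⟩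
  all_goals {
    have hspos : 0 < Real.sqrt (ΔF c1 c2 σ0 σ1 Φ) := Real.sqrt_pos.mpr hD
    have hlampos : 0 < lam := hlam ▸ Real.sqrt_pos.mpr hg
    simp only [ContinuousLinearMap.add_apply, ContinuousLinearMap.smul_apply,
      ContinuousLinearMap.sub_apply, ContinuousLinearMap.zero_apply,
      ContinuousLinearMap.proj_apply, smul_eq_mul, Pi.single_eq_same,
      Pi.single_eq_of_ne (by decide : (0:Fin 4) ≠ 1), Pi.single_eq_of_ne (by decide : (1:Fin 4) ≠ 0),
      Pi.single_eq_of_ne (by decide : (0:Fin 4) ≠ 2), Pi.single_eq_of_ne (by decide : (1:Fin 4) ≠ 2),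
      Pi.single_eq_of_ne (by decide : (0:Fin 4) ≠ 3), Pi.single_eq_of_ne (by decide : (1:Fin 4) ≠ 3)]
    rw [← hlam]
    simp only [cF, Pi.sub_apply]
    field_simp
    try ring
  }

/-- Gradients of the eigenvalues: for `|Φ| < 2κ` the maps `λᵢ` are
differentiable at `Φ`, with
`∇λ₁ = -∇λ₄ = (((σ0+σ1)√Δ + (a-b)(σ0-σ1))/(2λ₁√Δ), 4σ₁²φ₂/(λ₁√Δ), 0, 0)` and
`∇λ₂ = -∇λ₃ = (((σ0+σ1)√Δ - (a-b)(σ0-σ1))/(2λ₂√Δ), -4σ₁²φ₂/(λ₂√Δ), 0, 0)`. -/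
theorem eigenvalue_gradients (c1 c2 σ0 σ1 : ℝ) (hc2 : 0 < c2) (hc12 : c2 < c1) (hσ1 : σ1 ≠ 0) :
    ∃ κ > (0:ℝ), ∀ Φ : Fin 4 → ℝ, eucNorm4 Φ < 2 * κ →
      DifferentiableAt ℝ (lam1 c1 c2 σ0 σ1) Φ ∧
      DifferentiableAt ℝ (lam2 c1 c2 σ0 σ1) Φ ∧
      DifferentiableAt ℝ (lam3 c1 c2 σ0 σ1) Φ ∧
      DifferentiableAt ℝ (lam4 c1 c2 σ0 σ1) Φ ∧
      (∀ j : Fin 4,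
        fderiv ℝ (lam1 c1 c2 σ0 σ1) Φ (Pi.single j 1) =
          ![((σ0 + σ1) * Real.sqrt (ΔF c1 c2 σ0 σ1 Φ) +
                (aF c1 σ0 Φ - bF c2 σ1 Φ) * (σ0 - σ1)) /
              (2 * lam1 c1 c2 σ0 σ1 Φ * Real.sqrt (ΔF c1 c2 σ0 σ1 Φ)),
            4 * σ1 ^ 2 * Φ 1 / (lam1 c1 c2 σ0 σ1 Φ * Real.sqrt (ΔF c1 c2 σ0 σ1 Φ)),
            0, 0] j ∧
        fderiv ℝ (lam4 c1 c2 σ0 σ1) Φ (Pi.single j 1) =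
          -(fderiv ℝ (lam1 c1 c2 σ0 σ1) Φ (Pi.single j 1)) ∧
        fderiv ℝ (lam2 c1 c2 σ0 σ1) Φ (Pi.single j 1) =
          ![((σ0 + σ1) * Real.sqrt (ΔF c1 c2 σ0 σ1 Φ) -
                (aF c1 σ0 Φ - bF c2 σ1 Φ) * (σ0 - σ1)) /
              (2 * lam2 c1 c2 σ0 σ1 Φ * Real.sqrt (ΔF c1 c2 σ0 σ1 Φ)),
            -(4 * σ1 ^ 2 * Φ 1) / (lam2 c1 c2 σ0 σ1 Φ * Real.sqrt (ΔF c1 c2 σ0 σ1 Φ)),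
            0, 0] j ∧
        fderiv ℝ (lam3 c1 c2 σ0 σ1) Φ (Pi.single j 1) =
          -(fderiv ℝ (lam2 c1 c2 σ0 σ1) Φ (Pi.single j 1))) := by
  refine ⟨min (c1^2 - c2^2) (c2^2) / (32 * (|σ0| + |σ1| + 1)), ?_, ?_⟩
  · have hmpos : 0 < min (c1^2 - c2^2) (c2^2) := lt_min (by nlinarith) (by positivity)
    positivity
  intro Φ hΦ
  have habs : ∀ i : Fin 4, |Φ i| ≤ eucNorm4 Φ := by
    intro i
    rw [eucNorm4, ← Real.sqrt_sq_eq_abs]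
    exact Real.sqrt_le_sqrt (Finset.single_le_sum (fun k _ => sq_nonneg (Φ k)) (Finset.mem_univ i))
  have hMpos : (0:ℝ) < |σ0| + |σ1| + 1 := by positivity
  have key : ∀ i : Fin 4, 2 * (|σ0| + |σ1| + 1) * |Φ i| < min (c1^2 - c2^2) (c2^2) / 8 := by
    intro i
    have h0 : |Φ i| < 2 * (min (c1^2 - c2^2) (c2^2) / (32 * (|σ0| + |σ1| + 1))) :=
      lt_of_le_of_lt (habs i) hΦ
    have h2 := mul_lt_mul_of_pos_left h0
      (by positivity : (0:ℝ) < 2 * (|σ0| + |σ1| + 1))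
    calc 2 * (|σ0| + |σ1| + 1) * |Φ i|
        < 2 * (|σ0| + |σ1| + 1) *
            (2 * (min (c1^2 - c2^2) (c2^2) / (32 * (|σ0| + |σ1| + 1)))) := h2
      _ = min (c1^2 - c2^2) (c2^2) / 8 := by field_simp; ring
  obtain ⟨habD, hb7, hprod⟩ := core_bounds c1 c2 σ0 σ1 (Φ 0) (Φ 1) hc2 hc12 (key 0) (key 1)
  have habD' : 0 < aF c1 σ0 Φ - bF c2 σ1 Φ := habD
  have hb7' : (7/8) * c2^2 < bF c2 σ1 Φ := hb7
  have hprod' : cF σ1 Φ ^ 2 < aF c1 σ0 Φ * bF c2 σ1 Φ := hprod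
  have hD : 0 < ΔF c1 c2 σ0 σ1 Φ := by
    rw [ΔF]; nlinarith [sq_nonneg (cF σ1 Φ)]
  have hsum_pos : 0 < aF c1 σ0 Φ + bF c2 σ1 Φ := by nlinarith
  have hsqnn := Real.sqrt_nonneg (ΔF c1 c2 σ0 σ1 Φ)
  have hg1 : 0 < (aF c1 σ0 Φ + bF c2 σ1 Φ + 1 * Real.sqrt (ΔF c1 c2 σ0 σ1 Φ)) / 2 := by
    linarith
  have hslt : Real.sqrt (ΔF c1 c2 σ0 σ1 Φ) < aF c1 σ0 Φ + bF c2 σ1 Φ := by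
    rw [Real.sqrt_lt' hsum_pos, ΔF]; nlinarith
  have hg2 : 0 < (aF c1 σ0 Φ + bF c2 σ1 Φ + (-1) * Real.sqrt (ΔF c1 c2 σ0 σ1 Φ)) / 2 := by
    linarith
  have hlam1eq : lam1 c1 c2 σ0 σ1 Φ =
      Real.sqrt ((aF c1 σ0 Φ + bF c2 σ1 Φ + 1 * Real.sqrt (ΔF c1 c2 σ0 σ1 Φ)) / 2) := by
    rw [one_mul]; rfl
  have hlam2eq : lam2 c1 c2 σ0 σ1 Φ =
      Real.sqrt ((aF c1 σ0 Φ + bF c2 σ1 Φ + (-1) * Real.sqrt (ΔF c1 c2 σ0 σ1 Φ)) / 2) := by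
    show Real.sqrt _ = Real.sqrt _
    congr 1; ring
  obtain ⟨L1, hL1, v10, v11, v12, v13⟩ :=
    lam_deriv c1 c2 σ0 σ1 1 (lam1 c1 c2 σ0 σ1 Φ) Φ hD hg1 hlam1eq
  obtain ⟨L2, hL2, w10, w11, w12, w13⟩ :=
    lam_deriv c1 c2 σ0 σ1 (-1) (lam2 c1 c2 σ0 σ1 Φ) Φ hD hg2 hlam2eq
  have hf1 : lam1 c1 c2 σ0 σ1
      = (fun Ψ => Real.sqrt ((aF c1 σ0 Ψ + bF c2 σ1 Ψ + 1 * Real.sqrt (ΔF c1 c2 σ0 σ1 Ψ)) / 2)) := by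
    funext Ψ; rw [one_mul]; rfl
  have hf2 : lam2 c1 c2 σ0 σ1
      = (fun Ψ => Real.sqrt ((aF c1 σ0 Ψ + bF c2 σ1 Ψ + (-1) * Real.sqrt (ΔF c1 c2 σ0 σ1 Ψ)) / 2)) := by
    funext Ψ
    show Real.sqrt _ = Real.sqrt _
    congr 1; ring
  have hlam1 : HasFDerivAt (lam1 c1 c2 σ0 σ1) L1 Φ := by rw [hf1]; exact hL1
  have hlam2 : HasFDerivAt (lam2 c1 c2 σ0 σ1) L2 Φ := by rw [hf2]; exact hL2
  have hlam3 : HasFDerivAt (lam3 c1 c2 σ0 σ1) (-L2) Φ := hlam2.neg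
  have hlam4 : HasFDerivAt (lam4 c1 c2 σ0 σ1) (-L1) Φ := hlam1.neg
  refine ⟨hlam1.differentiableAt, hlam2.differentiableAt, hlam3.differentiableAt,
    hlam4.differentiableAt, ?_⟩
  intro j
  rw [hlam1.fderiv, hlam2.fderiv, hlam3.fderiv, hlam4.fderiv]
  refine ⟨?_, by simp, ?_, by simp⟩
  · fin_cases j
    · refine v10.trans ?_; simp
    · refine v11.trans ?_; simp; try ring
    · refine v12.trans ?_; simp
    · refine v13.trans ?_; simp
  · fin_cases j
    · refine w10.trans ?_; simp; try ring_nf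
    · refine w11.trans ?_; simp; try ring
    · refine w12.trans ?_; simp
    · refine w13.trans ?_; simp


end ElasticIP
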